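/- (Identifiability engine for GHD DAG models.) Let μ be a probability mass function on a countable set Z, let θ : Z → (0, ∞), and for each z ∈ Z let p_z be a probability mass function on the nonnegative integers following GHD(a, b, θ(z)), where the positive parameter vectors a = (a_1, …, a_P) and b = (b_1, …, b_Q) do not depend on z. Let q(k) := ∑_{z∈Z} μ(z) p_z(k) be the mixture. Let r ≥ 2 be an integer with ∑_{z∈Z} μ(z) θ(z)^r < ∞, and suppose there exist z, z′ ∈ Z with μ(z) > 0, μ(z′) > 0 and θ(z) ≠ θ(z′). Then ∑_{k≥0} (k)_r · q(k) > (∑_{k≥0} k · q(k))^r · ∏_{i=1}^P (⟨a_i⟩^r / a_i^r) · ∏_{l=1}^Q (b_l^r / ⟨b_l⟩^r); that is, the r-th factorial moment of the mixture strictly exceeds f^{(r)} evaluated at its mean, where f^{(r)}(x) = x^r ∏_i (⟨a_i⟩^r / a_i^r) ∏_l (b_l^r / ⟨b_l⟩^r). -/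

import Mathlib

/-- The rising factorial `⟨a⟩^j = a (a+1) ⋯ (a+j-1)`. -/
noncomputable def risingFact (a : ℝ) (j : ℕ) : ℝ := ∏ i ∈ Finset.range j, (a + i)

/-- The `j`-th term of the generalized hypergeometric series
`(∏ᵢ ⟨aᵢ⟩^j / ∏ₗ ⟨bₗ⟩^j) · (θ(s-1))^j / j!`. -/
noncomputable def ghdSeries {P Q : ℕ} (a : Fin P → ℝ) (b : Fin Q → ℝ) (θ s : ℝ) (j : ℕ) : ℝ :=
  ((∏ i, risingFact (a i) j) / (∏ l, risingFact (b l) j)) * (θ * (s - 1)) ^ j / (j.factorial : ℝ)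

/-- A probability mass function `p` on `ℕ` follows the generalized hypergeometric
distribution `GHD(a, b, θ)` if there is some `ρ > 1` such that for every `s` with `|s| < ρ`,
both the probability generating series and the generalized hypergeometric series converge and
`∑ₖ p(k) sᵏ = ∑ⱼ (∏ᵢ ⟨aᵢ⟩^j / ∏ₗ ⟨bₗ⟩^j) (θ(s-1))^j / j!`. -/
def IsGHD {P Q : ℕ} (a : Fin P → ℝ) (b : Fin Q → ℝ) (θ : ℝ) (p : ℕ → ℝ) : Prop :=
  (∀ k, 0 ≤ p k) ∧ Summable p ∧ (∑' k, p k) = 1 ∧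
    ∃ ρ : ℝ, 1 < ρ ∧ ∀ s : ℝ, |s| < ρ →
      Summable (fun k => p k * s ^ k) ∧
      Summable (fun j => ghdSeries a b θ s j) ∧
      (∑' k, p k * s ^ k) = ∑' j, ghdSeries a b θ s j

lemma risingFact_pos {a : ℝ} (h : 0 < a) (j : ℕ) : 0 < risingFact a j :=
  Finset.prod_pos fun i _ => by positivity

lemma risingFact_one (a : ℝ) : risingFact a 1 = a := by simp [risingFact]

lemma tangent_le {m x : ℝ} (hm : 0 < m) (hx : 0 ≤ x) {r : ℕ} (hr : 2 ≤ r) :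
    m ^ r + r * m ^ (r - 1) * (x - m) ≤ x ^ r := by
  have hm' : m ≠ 0 := hm.ne'
  have hpow : m ^ (r - 1) * m = m ^ r := by rw [← pow_succ]; congr 1; omega
  have h1 : -1 ≤ x / m := by
    have : 0 ≤ x / m := div_nonneg hx hm.le
    linarith
  have h2 := one_add_mul_sub_le_pow h1 r
  have h3 := mul_le_mul_of_nonneg_left h2 (pow_pos hm r).le
  calc m ^ r + r * m ^ (r - 1) * (x - m)
      = m ^ r * (1 + r * (x / m - 1)) := by
        rw [← hpow]; field_simp
    _ ≤ m ^ r * (x / m) ^ r := h3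
    _ = x ^ r := by rw [div_pow]; field_simp

lemma tangent_lt {m x : ℝ} (hm : 0 < m) (hx : 0 ≤ x) (hne : x ≠ m) {r : ℕ} (hr : 2 ≤ r) :
    m ^ r + r * m ^ (r - 1) * (x - m) < x ^ r := by
  have hm' : m ≠ 0 := hm.ne'
  have hpow : m ^ (r - 1) * m = m ^ r := by rw [← pow_succ]; congr 1; omega
  have h1 : -1 ≤ x / m - 1 := by
    have : 0 ≤ x / m := div_nonneg hx hm.le
    linarith
  have h0 : x / m - 1 ≠ 0 := by
    intro h
    apply hne
    have : x / m = 1 := by linarith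
    field_simp at this
    linarith
  have hp : (1 : ℝ) < (r : ℝ) := by
    have : (2 : ℝ) ≤ (r : ℝ) := by exact_mod_cast hr
    linarith
  have h2 := one_add_mul_self_lt_rpow_one_add h1 h0 hp
  rw [show (1 : ℝ) + (x / m - 1) = x / m by ring, Real.rpow_natCast] at h2
  have h3 := mul_lt_mul_of_pos_left h2 (pow_pos hm r)
  calc m ^ r + r * m ^ (r - 1) * (x - m)
      = m ^ r * (1 + r * (x / m - 1)) := by
        rw [← hpow]; field_simp
    _ < m ^ r * (x / m) ^ r := h3
    _ = x ^ r := by rw [div_pow]; field_simp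

open FormalMultilinearSeries ENNReal NNReal in
/-- Two real power series that converge and agree on a neighbourhood of `0` have equal
coefficients. -/
lemma coeff_unique {α β : ℕ → ℝ} {ε : ℝ} (hε : 0 < ε)
    (h : ∀ t : ℝ, |t| < ε → Summable (fun j => α j * t ^ j) ∧ Summable (fun j => β j * t ^ j) ∧
      (∑' j, α j * t ^ j) = ∑' j, β j * t ^ j) : α = β := by
  set f : ℝ → ℝ := fun t => ∑' j, α j * t ^ j with hf
  have hε2 : (0:ℝ) < ε / 2 := by linarith
  have hball : ∀ y : ℝ, y ∈ Metric.eball (0:ℝ) (ENNReal.ofReal (ε/2)) → |y| < ε := by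
    intro y hy
    rw [Metric.mem_eball, edist_dist, Real.dist_eq, sub_zero] at hy
    have h2 := (ENNReal.ofReal_lt_ofReal_iff hε2).1 hy
    linarith
  have hrad : ∀ γ : ℕ → ℝ, Summable (fun j => γ j * (ε/2) ^ j) →
      ENNReal.ofReal (ε/2) ≤ (ofScalars ℝ γ).radius := by
    intro γ hs
    have heq : ENNReal.ofReal (ε/2) = ((ε/2).toNNReal : ℝ≥0∞) := rfl
    rw [heq]
    apply FormalMultilinearSeries.le_radius_of_summable
    refine hs.abs.congr fun n => ?_
    rw [ofScalars_norm, abs_mul, abs_pow, abs_of_nonneg hε2.le, Real.norm_eq_abs,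
      Real.coe_toNNReal _ hε2.le]
  have hεhalf : |ε/2| < ε := by rw [abs_of_nonneg hε2.le]; linarith
  have hα : HasFPowerSeriesAt f (ofScalars ℝ α) 0 := by
    refine ⟨ENNReal.ofReal (ε/2), hrad α ((h _ hεhalf).1), by simp [hε2], ?_⟩
    intro y hy
    have hy' := hball y hy
    rw [zero_add]
    simp only [FormalMultilinearSeries.ofScalars_apply_eq, smul_eq_mul]
    exact ((h y hy').1).hasSum
  have hβ : HasFPowerSeriesAt f (ofScalars ℝ β) 0 := by
    refine ⟨ENNReal.ofReal (ε/2), hrad β ((h _ hεhalf).2.1), by simp [hε2], ?_⟩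
    intro y hy
    have hy' := hball y hy
    rw [zero_add]
    simp only [FormalMultilinearSeries.ofScalars_apply_eq, smul_eq_mul]
    have := ((h y hy').2.1).hasSum
    rwa [← (h y hy').2.2] at this
  exact FormalMultilinearSeries.ofScalars_series_injective ℝ ℝ
    (hα.eq_formalMultilinearSeries hβ)

open Finset in
/-- The `n`-th binomial moment of a GHD distribution. -/
lemma isGHD_choose_moment {P Q : ℕ} {a : Fin P → ℝ} {b : Fin Q → ℝ} {θ : ℝ} {p : ℕ → ℝ}
    (hg : IsGHD a b θ p) :
    ∀ n, Summable (fun k => (k.choose n : ℝ) * p k) ∧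
    (∑' k, (k.choose n : ℝ) * p k)
      = ((∏ i, risingFact (a i) n) / (∏ l, risingFact (b l) n)) * θ ^ n / (n.factorial : ℝ) := by
  obtain ⟨hpos, hsum, _, ρ, hρ, hser⟩ := hg
  set ε := ρ - 1 with hεdef
  have hε : 0 < ε := by simp [hεdef]; linarith
  set g : ℝ → ℕ × ℕ → ℝ := fun t kj => p kj.1 * ((kj.1.choose kj.2 : ℝ) * t ^ kj.2) with hgdef
  have hcol : ∀ (t : ℝ) (k : ℕ),
      HasSum (fun j => g t (k, j)) (p k * (1 + t) ^ k) := by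
    intro t k
    have hv : ∀ j ∉ Finset.range (k + 1), g t (k, j) = 0 := by
      intro j hj
      rw [Finset.mem_range, not_lt] at hj
      simp [hgdef, Nat.choose_eq_zero_of_lt (by omega : k < j)]
    have := hasSum_sum_of_ne_finset_zero (s := Finset.range (k + 1)) (L := SummationFilter.unconditional ℕ) hv
    convert this using 1
    rw [show (1 : ℝ) + t = t + 1 by ring, add_pow, Finset.mul_sum]
    refine Finset.sum_congr rfl fun j hj => ?_
    simp only [hgdef, one_pow]
    ring
  have hG : ∀ t : ℝ, |t| < ε → Summable (g t) := by
    intro t ht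
    rw [← summable_abs_iff]
    have habs : (fun kj => |g t kj|) = g |t| := by
      funext kj
      simp only [hgdef, abs_mul, abs_of_nonneg (hpos kj.1), abs_pow, Nat.abs_cast]
    rw [habs, summable_prod_of_nonneg (by
      intro kj
      have := hpos kj.1
      simp only [hgdef]
      positivity)]
    refine ⟨fun k => (hcol |t| k).summable, ?_⟩
    have hs' : abs (1 + |t|) < ρ := by
      rw [abs_of_nonneg (by positivity)]
      have := abs_nonneg t
      simp only [hεdef] at ht; linarith
    refine ((hser _ hs').1).congr fun k => ?_
    rw [(hcol |t| k).tsum_eq]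
  have hβsum : ∀ j, Summable fun k => (k.choose j : ℝ) * p k := by
    intro j
    have h2 : |ε / 2| < ε := by rw [abs_of_nonneg (by linarith)]; linarith
    have h0 := ((Equiv.prodComm ℕ ℕ).summable_iff.mpr (hG (ε/2) h2)).prod_factor j
    have hne : ((ε/2) ^ j)⁻¹ ≠ 0 := by positivity
    have := h0.mul_right ((ε/2) ^ j)⁻¹
    refine this.congr fun k => ?_
    simp only [hgdef, Equiv.prodComm_apply, Prod.swap_prod_mk, Function.comp]
    field_simp
  intro n
  refine ⟨hβsum n, ?_⟩
  set α : ℕ → ℝ := fun j =>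
    ((∏ i, risingFact (a i) j) / (∏ l, risingFact (b l) j)) * θ ^ j / (j.factorial : ℝ) with hαdef
  set β : ℕ → ℝ := fun j => ∑' k, (k.choose j : ℝ) * p k with hβdef
  have key : α = β := by
    apply coeff_unique hε
    intro t ht
    set s := 1 + t with hsdef
    have hs : |s| < ρ := by
      have h1 : |s| ≤ 1 + |t| := by
        rw [hsdef]; exact (abs_add_le 1 t).trans (by simp)
      simp only [hεdef] at ht; linarith
    obtain ⟨hS1, hS2, hEq⟩ := hser s hs
    have hghd : (fun j => ghdSeries a b θ s j) = fun j => α j * t ^ j := by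
      funext j
      simp only [ghdSeries, hαdef, hsdef, add_sub_cancel_left, mul_pow]
      ring
    have hS2' : Summable fun j => α j * t ^ j := by rwa [hghd] at hS2
    have hGt := (hG t ht).hasSum
    set S := ∑' kj, g t kj with hSdef
    have hrow : HasSum (fun k => p k * s ^ k) S := by
      rw [hsdef]
      exact hGt.prod_fiberwise (fun k => hcol t k)
    have hswap : HasSum (g t ∘ (Equiv.prodComm ℕ ℕ)) S :=
      (Equiv.prodComm ℕ ℕ).hasSum_iff.mpr hGt
    have hcolS : ∀ j, HasSum (fun k => (g t ∘ (Equiv.prodComm ℕ ℕ)) (j, k)) (β j * t ^ j) := by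
      intro j
      have h1 := ((hβsum j).hasSum).mul_right (t ^ j)
      have heq : (fun k => (g t ∘ (Equiv.prodComm ℕ ℕ)) (j, k))
          = fun k => ((k.choose j : ℝ) * p k) * t ^ j := by
        funext k
        simp only [hgdef, Function.comp, Equiv.prodComm_apply, Prod.swap_prod_mk]
        ring
      rw [heq]
      exact h1
    have hβS : HasSum (fun j => β j * t ^ j) S := hswap.prod_fiberwise hcolS
    refine ⟨hS2', hβS.summable, ?_⟩
    rw [hghd] at hEq
    rw [hβS.tsum_eq, ← hrow.tsum_eq, hEq]
  have h2 := congrFun key n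
  simp only [hαdef, hβdef] at h2
  exact h2.symm

/-- Binomial moments of a mixture of GHD distributions. -/
lemma mixture_moment {Z : Type*} {P Q : ℕ} {a : Fin P → ℝ} {b : Fin Q → ℝ}
    (μ : Z → ℝ) (hμ : ∀ z, 0 ≤ μ z) (hμsum : Summable μ) (θ : Z → ℝ)
    (p : Z → ℕ → ℝ) (hp : ∀ z, IsGHD a b (θ z) (p z))
    (q : ℕ → ℝ) (hq : ∀ k, q k = ∑' z, μ z * p z k)
    (n : ℕ) (hn : Summable fun z => μ z * θ z ^ n) :
    HasSum (fun k => (k.choose n : ℝ) * q k)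
      (((∏ i, risingFact (a i) n) / (∏ l, risingFact (b l) n)) / (n.factorial : ℝ)
        * (∑' z, μ z * θ z ^ n)) := by
  classical
  set c : ℝ := ((∏ i, risingFact (a i) n) / (∏ l, risingFact (b l) n)) / (n.factorial : ℝ)
    with hcdef
  set F : Z × ℕ → ℝ := fun zk => μ zk.1 * ((zk.2.choose n : ℝ) * p zk.1 zk.2) with hFdef
  have hrow : ∀ z, HasSum (fun k => F (z, k)) (c * (μ z * θ z ^ n)) := by
    intro z
    have h1 := ((isGHD_choose_moment (hp z) n).1).hasSum.mul_left (μ z)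
    rw [(isGHD_choose_moment (hp z) n).2] at h1
    have hval : μ z * (((∏ i, risingFact (a i) n) / (∏ l, risingFact (b l) n)) * θ z ^ n
        / (n.factorial : ℝ)) = c * (μ z * θ z ^ n) := by rw [hcdef]; ring
    rw [hval] at h1
    exact h1
  have hFsum : Summable F := by
    rw [summable_prod_of_nonneg (by
      intro zk
      have h1 := hμ zk.1
      have h2 := (hp zk.1).1 zk.2
      simp only [hFdef]
      positivity)]
    refine ⟨fun z => (hrow z).summable, ?_⟩
    refine (hn.mul_left c).congr fun z => ?_
    rw [(hrow z).tsum_eq]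
  set S := ∑' zk, F zk with hSdef
  have hFS : HasSum F S := hFsum.hasSum
  have hzside : HasSum (fun z => c * (μ z * θ z ^ n)) S := hFS.prod_fiberwise hrow
  have hSval : S = c * ∑' z, μ z * θ z ^ n := hzside.unique (hn.hasSum.mul_left c)
  have hswap : HasSum (F ∘ (Equiv.prodComm ℕ Z)) S :=
    (Equiv.prodComm ℕ Z).hasSum_iff.mpr hFS
  have hcolS : ∀ k, HasSum (fun z => (F ∘ (Equiv.prodComm ℕ Z)) (k, z))
      ((k.choose n : ℝ) * q k) := by
    intro k
    have hple : ∀ z, p z k ≤ 1 := by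
      intro z
      obtain ⟨hpos, hs, hs1, _⟩ := hp z
      calc p z k ≤ ∑' j, p z j := Summable.le_tsum hs k fun j _ => hpos j
        _ = 1 := hs1
    have hsummable : Summable fun z => μ z * p z k :=
      Summable.of_nonneg_of_le (fun z => mul_nonneg (hμ z) ((hp z).1 k))
        (fun z => by
          have := mul_le_mul_of_nonneg_left (hple z) (hμ z)
          simpa using this) hμsum
    have h1 : HasSum (fun z => μ z * p z k) (q k) := by
      rw [hq k]
      exact hsummable.hasSum
    have h2 := h1.mul_left ((k.choose n : ℝ))
    have heq : (fun z => (F ∘ (Equiv.prodComm ℕ Z)) (k, z))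
        = fun z => (k.choose n : ℝ) * (μ z * p z k) := by
      funext z
      simp only [hFdef, Function.comp, Equiv.prodComm_apply, Prod.swap_prod_mk]
      ring
    rw [heq]
    exact h2
  have hkside : HasSum (fun k => (k.choose n : ℝ) * q k) S := hswap.prod_fiberwise hcolS
  rwa [hSval] at hkside

/-- **identifiability engine for GHD DAG models.** Let `μ` be a pmf on a
countable set `Z`, `θ : Z → (0, ∞)`, and for each `z` let `p z` be a pmf on `ℕ` following
`GHD(a, b, θ(z))` with parameter vectors `a`, `b` not depending on `z`. Let
`q(k) = ∑_z μ(z) p_z(k)` be the mixture. If `r ≥ 2`, `∑_z μ(z) θ(z)^r < ∞`, and `θ` is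
non-degenerate on the support of `μ`, then the `r`-th factorial moment of `q` strictly
exceeds `f⁽ʳ⁾` evaluated at the mean of `q`:
`∑ₖ (k)ᵣ q(k) > (∑ₖ k q(k))^r ∏ᵢ (⟨aᵢ⟩^r/aᵢ^r) ∏ₗ (bₗ^r/⟨bₗ⟩^r)`. -/
theorem ghd_mixture_strict_overdispersion {Z : Type*} [Countable Z]
    {P Q : ℕ} (a : Fin P → ℝ) (b : Fin Q → ℝ)
    (ha : ∀ i, 0 < a i) (hb : ∀ l, 0 < b l)
    (μ : Z → ℝ) (hμ : ∀ z, 0 ≤ μ z) (hμsum : Summable μ) (hμ1 : (∑' z, μ z) = 1)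
    (θ : Z → ℝ) (hθ : ∀ z, 0 < θ z)
    (p : Z → ℕ → ℝ) (hp : ∀ z, IsGHD a b (θ z) (p z))
    (q : ℕ → ℝ) (hq : ∀ k, q k = ∑' z, μ z * p z k)
    (r : ℕ) (hr : 2 ≤ r) (hmom : Summable (fun z => μ z * θ z ^ r))
    (hnd : ∃ z z' : Z, 0 < μ z ∧ 0 < μ z' ∧ θ z ≠ θ z') :
    (∑' k : ℕ, (k.descFactorial r : ℝ) * q k)
      > (∑' k : ℕ, (k : ℝ) * q k) ^ r
          * (∏ i, risingFact (a i) r / (a i) ^ r)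
          * (∏ l, (b l) ^ r / risingFact (b l) r) := by
  classical
  have hA : 0 < ∏ i, risingFact (a i) r := Finset.prod_pos fun i _ => risingFact_pos (ha i) r
  have hB : 0 < ∏ l, risingFact (b l) r := Finset.prod_pos fun l _ => risingFact_pos (hb l) r
  have hA1 : 0 < ∏ i, a i := Finset.prod_pos fun i _ => ha i
  have hB1 : 0 < ∏ l, b l := Finset.prod_pos fun l _ => hb l
  have hθ1 : Summable fun z => μ z * θ z ^ 1 := by
    refine Summable.of_nonneg_of_le (fun z => by
        have h1 := hμ z
        have h2 := (hθ z).le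
        positivity)
      (fun z => ?_) (hμsum.add hmom)
    rw [pow_one]
    have hnn : 0 ≤ μ z * θ z ^ r := by
      have h1 := hμ z
      have h2 := (hθ z).le
      positivity
    rcases le_total (θ z) 1 with h | h
    · have h2 : μ z * θ z ≤ μ z * 1 := mul_le_mul_of_nonneg_left h (hμ z)
      have h3 := hμ z
      linarith
    · have h2 : θ z ≤ θ z ^ r := le_self_pow₀ h (by omega)
      have h3 : μ z * θ z ≤ μ z * θ z ^ r := mul_le_mul_of_nonneg_left h2 (hμ z)
      have h4 := hμ z
      linarith
  have hm1 := mixture_moment μ hμ hμsum θ p hp q hq 1 hθ1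
  have hmr := mixture_moment μ hμ hμsum θ p hp q hq r hmom
  set M1 := ∑' z, μ z * θ z ^ 1 with hM1
  set Mr := ∑' z, μ z * θ z ^ r with hMr
  -- the mean of q
  have hmean : (∑' k : ℕ, (k : ℝ) * q k) = (∏ i, a i) / (∏ l, b l) * M1 := by
    have hfn : (fun k : ℕ => (k : ℝ) * q k) = fun k => (k.choose 1 : ℝ) * q k := by
      funext k
      rw [Nat.choose_one_right]
    rw [hfn, hm1.tsum_eq]
    simp [risingFact_one]
  -- the r-th factorial moment of q
  have hlhs : (∑' k : ℕ, (k.descFactorial r : ℝ) * q k)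
      = (∏ i, risingFact (a i) r) / (∏ l, risingFact (b l) r) * Mr := by
    have h1 : (fun k : ℕ => (k.descFactorial r : ℝ) * q k)
        = fun k => (r.factorial : ℝ) * ((k.choose r : ℝ) * q k) := by
      funext k
      rw [Nat.descFactorial_eq_factorial_mul_choose]
      push_cast
      ring
    rw [h1, tsum_mul_left, hmr.tsum_eq]
    have hfac : ((r.factorial : ℝ)) ≠ 0 := by positivity
    field_simp
  rw [hlhs, hmean]
  -- simplify the products
  have hprod1 : (∏ i, risingFact (a i) r / a i ^ r)
      = (∏ i, risingFact (a i) r) / (∏ i, a i) ^ r := by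
    rw [Finset.prod_div_distrib, Finset.prod_pow]
  have hprod2 : (∏ l, b l ^ r / risingFact (b l) r)
      = (∏ l, b l) ^ r / (∏ l, risingFact (b l) r) := by
    rw [Finset.prod_div_distrib, Finset.prod_pow]
  have hA1ne := hA1.ne'
  have hB1ne := hB1.ne'
  have hAne := hA.ne'
  have hBne := hB.ne'
  have hRHS : ((∏ i, a i) / (∏ l, b l) * M1) ^ r * (∏ i, risingFact (a i) r / a i ^ r)
      * (∏ l, b l ^ r / risingFact (b l) r)
      = (∏ i, risingFact (a i) r) / (∏ l, risingFact (b l) r) * M1 ^ r := by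
    rw [hprod1, hprod2, mul_pow, div_pow]
    field_simp
  rw [hRHS]
  -- strict Jensen inequality
  obtain ⟨z0, z1, h0, h1, hne01⟩ := hnd
  have hm0 : 0 < M1 := by
    have hle : μ z0 * θ z0 ^ 1 ≤ M1 :=
      Summable.le_tsum hθ1 z0 fun j _ => by
        have ha1 := hμ j
        have ha2 := (hθ j).le
        positivity
    have hpos : 0 < μ z0 * θ z0 ^ 1 := by
      have := hθ z0
      positivity
    linarith
  obtain ⟨w, hμw, hθw⟩ : ∃ w, 0 < μ w ∧ θ w ≠ M1 := by
    by_cases hc : θ z0 = M1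
    · exact ⟨z1, h1, fun h => hne01 (by rw [hc, h])⟩
    · exact ⟨z0, h0, hc⟩
  have hpowm : M1 ^ (r - 1) * M1 = M1 ^ r := by rw [← pow_succ]; congr 1; omega
  set G : Z → ℝ := fun z => μ z * (M1 ^ r + r * M1 ^ (r - 1) * (θ z - M1)) with hGdef
  have hfeq : (fun z => (M1 ^ r - r * M1 ^ r) * μ z
      + ((r : ℝ) * M1 ^ (r - 1)) * (μ z * θ z ^ 1)) = G := by
    funext z
    simp only [hGdef, pow_one]
    linear_combination (r : ℝ) * μ z * hpowm
  have hGsum : Summable G := by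
    rw [← hfeq]
    exact (hμsum.mul_left (M1 ^ r - r * M1 ^ r)).add (hθ1.mul_left ((r : ℝ) * M1 ^ (r - 1)))
  have hGhasSum : HasSum G (M1 ^ r) := by
    have h2 := (hμsum.hasSum.mul_left (M1 ^ r - r * M1 ^ r)).add
      (hθ1.hasSum.mul_left ((r : ℝ) * M1 ^ (r - 1)))
    rw [hμ1, ← hM1] at h2
    rw [hfeq] at h2
    have hval : (M1 ^ r - r * M1 ^ r) * 1 + ((r : ℝ) * M1 ^ (r - 1)) * M1 = M1 ^ r := by
      linear_combination (r : ℝ) * hpowm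
    rwa [hval] at h2
  have hjensen : M1 ^ r < Mr := by
    rw [← hGhasSum.tsum_eq, hMr]
    refine Summable.tsum_lt_tsum (i := w) (fun z => ?_) ?_ hGsum hmom
    · exact mul_le_mul_of_nonneg_left (tangent_le hm0 (hθ z).le hr) (hμ z)
    · exact mul_lt_mul_of_pos_left (tangent_lt hm0 (hθ w).le hθw hr) hμw
  exact mul_lt_mul_of_pos_left hjensen (div_pos hA hB)
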